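/- Harmonic mean bound for sums over linear maps: let $B_j:\mathbb{R}^n\to\mathbb{R}^{n_j}$ be linear maps, $c_j>0$, and $G_j,A_j$ positive definite on $\mathbb{R}^{n_j}$ such that $\sum_j c_jB_j^*G_jB_j$ and $\sum_j c_jB_j^*A_jB_j$ are positive definite. Then $\sum_{j=1}^m c_jB_j^*(G_j:A_j)B_j \le \big(\sum_{j=1}^m c_jB_j^*G_jB_j\big):\big(\sum_{j=1}^m c_jB_j^*A_jB_j\big)$, where $X:Y=(X^{-1}+Y^{-1})^{-1}$. -/

import Mathlib

open Matrix BigOperators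

section Aux

variable {k : ℕ}

private lemma sumMulVec {m k : ℕ} (M : Fin m → Matrix (Fin k) (Fin k) ℝ) (u : Fin k → ℝ) :
    (∑ j, M j) *ᵥ u = ∑ j, (M j) *ᵥ u := by
  ext i
  simp only [mulVec, dotProduct, Finset.sum_apply, Matrix.sum_apply, Finset.sum_mul]
  rw [Finset.sum_comm]

private lemma dotSum {m k : ℕ} (f : Fin m → Fin k → ℝ) (u : Fin k → ℝ) :
    u ⬝ᵥ (∑ j, f j) = ∑ j, u ⬝ᵥ f j := by
  simp only [dotProduct, Finset.sum_apply, Finset.mul_sum]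
  rw [Finset.sum_comm]

/-- move a matrix from the left argument of a quadratic form to the right. -/
private lemma mdot {k l r : ℕ} (M : Matrix (Fin k) (Fin l) ℝ) (N : Matrix (Fin k) (Fin r) ℝ)
    (a : Fin l → ℝ) (b : Fin r → ℝ) :
    (M *ᵥ a) ⬝ᵥ N *ᵥ b = a ⬝ᵥ (Mᵀ * N) *ᵥ b := by
  rw [dotProduct_mulVec, ← vecMul_transpose, vecMul_vecMul, ← dotProduct_mulVec]

private lemma quadSum {n m : ℕ} {nj : Fin m → ℕ}
    (B : ∀ j : Fin m, Matrix (Fin (nj j)) (Fin n) ℝ) (c : Fin m → ℝ)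
    (M : ∀ j : Fin m, Matrix (Fin (nj j)) (Fin (nj j)) ℝ) (u v : Fin n → ℝ) :
    u ⬝ᵥ (∑ j, c j • ((B j)ᵀ * M j * B j)) *ᵥ v
      = ∑ j, c j * ((B j *ᵥ u) ⬝ᵥ (M j) *ᵥ (B j *ᵥ v)) := by
  rw [sumMulVec, dotSum]
  refine Finset.sum_congr rfl fun j _ => ?_
  rw [smul_mulVec, dotProduct_smul, smul_eq_mul]
  congr 1
  rw [mulVec_mulVec, mdot, ← Matrix.mul_assoc]

private lemma psd_smul {c : ℝ} (hc : 0 ≤ c) {M : Matrix (Fin k) (Fin k) ℝ}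
    (hM : M.PosSemidef) : (c • M).PosSemidef := by
  refine posSemidef_iff_dotProduct_mulVec.mpr ⟨?_, fun x => ?_⟩
  · unfold Matrix.IsHermitian
    rw [conjTranspose_smul, hM.1.eq]
    simp
  · rw [smul_mulVec, dotProduct_smul, smul_eq_mul]
    exact mul_nonneg hc (hM.dotProduct_mulVec_nonneg x)

private lemma psd_sum {m k : ℕ} (M : Fin m → Matrix (Fin k) (Fin k) ℝ)
    (h : ∀ j, (M j).PosSemidef) : (∑ j, M j).PosSemidef :=
  Finset.sum_induction M Matrix.PosSemidef (fun _ _ ha hb => ha.add hb)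
    Matrix.PosSemidef.zero (fun j _ => h j)

private lemma harm_eq (X Y : Matrix (Fin k) (Fin k) ℝ) (hX : X.PosDef) (hY : Y.PosDef) :
    (X⁻¹ + Y⁻¹)⁻¹ = Y * (X + Y)⁻¹ * X := by
  have hXd : IsUnit X.det := isUnit_iff_ne_zero.2 hX.det_pos.ne'
  have hYd : IsUnit Y.det := isUnit_iff_ne_zero.2 hY.det_pos.ne'
  have h1 : X⁻¹ * (X + Y) * Y⁻¹ = X⁻¹ + Y⁻¹ := by
    rw [Matrix.mul_add, Matrix.add_mul, Matrix.nonsing_inv_mul _ hXd, Matrix.one_mul,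
      Matrix.mul_assoc X⁻¹ Y Y⁻¹, Matrix.mul_nonsing_inv _ hYd, Matrix.mul_one, add_comm]
  rw [← h1, Matrix.mul_inv_rev, Matrix.mul_inv_rev, Matrix.nonsing_inv_nonsing_inv _ hXd,
    Matrix.nonsing_inv_nonsing_inv _ hYd, Matrix.mul_assoc]

/-- Key pointwise harmonic-mean inequality. -/
private lemma harm_quad (X Y : Matrix (Fin k) (Fin k) ℝ) (hX : X.PosDef) (hY : Y.PosDef)
    (u v : Fin k → ℝ) :
    (u + v) ⬝ᵥ ((X⁻¹ + Y⁻¹)⁻¹ *ᵥ (u + v)) ≤ u ⬝ᵥ X *ᵥ u + v ⬝ᵥ Y *ᵥ v := by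
  have hS : (X + Y).PosDef := hX.add hY
  have hSd : IsUnit (X + Y).det := isUnit_iff_ne_zero.2 hS.det_pos.ne'
  have hSi : (X + Y)⁻¹.PosDef := hS.inv
  set S := X + Y with hSdef
  have hXt : Xᵀ = X := by simpa using hX.1.eq
  have hYt : Yᵀ = Y := by simpa using hY.1.eq
  have hH : (X⁻¹ + Y⁻¹)⁻¹ = Y * S⁻¹ * X := harm_eq X Y hX hY
  have hH' : (X⁻¹ + Y⁻¹)⁻¹ = X * S⁻¹ * Y := by
    rw [add_comm X⁻¹, harm_eq Y X hY hX, add_comm Y X]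
  have hXeq : X = X * S⁻¹ * X + X * S⁻¹ * Y := by
    rw [← Matrix.mul_add, ← hSdef, Matrix.mul_assoc,
      Matrix.nonsing_inv_mul _ hSd, Matrix.mul_one]
  have hYeq : Y = Y * S⁻¹ * X + Y * S⁻¹ * Y := by
    rw [← Matrix.mul_add, ← hSdef, Matrix.mul_assoc,
      Matrix.nonsing_inv_mul _ hSd, Matrix.mul_one]
  have hw : 0 ≤ (X *ᵥ u - Y *ᵥ v) ⬝ᵥ S⁻¹ *ᵥ (X *ᵥ u - Y *ᵥ v) := by
    have := hSi.posSemidef.dotProduct_mulVec_nonneg (X *ᵥ u - Y *ᵥ v)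
    simpa using this
  have e1 : (X *ᵥ u - Y *ᵥ v) ⬝ᵥ S⁻¹ *ᵥ (X *ᵥ u - Y *ᵥ v)
      = u ⬝ᵥ (X * S⁻¹ * X) *ᵥ u - u ⬝ᵥ (X * S⁻¹ * Y) *ᵥ v
        - v ⬝ᵥ (Y * S⁻¹ * X) *ᵥ u + v ⬝ᵥ (Y * S⁻¹ * Y) *ᵥ v := by
    rw [mulVec_sub, dotProduct_sub, sub_dotProduct, sub_dotProduct,
      mdot X S⁻¹, mdot Y S⁻¹, mdot X S⁻¹, mdot Y S⁻¹, hXt, hYt]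
    simp only [mulVec_mulVec, ← Matrix.mul_assoc]
    ring
  have e2 : u ⬝ᵥ X *ᵥ u = u ⬝ᵥ (X * S⁻¹ * X) *ᵥ u + u ⬝ᵥ (X * S⁻¹ * Y) *ᵥ u := by
    conv_lhs => rw [hXeq]
    rw [add_mulVec, dotProduct_add]
  have e3 : v ⬝ᵥ Y *ᵥ v = v ⬝ᵥ (Y * S⁻¹ * X) *ᵥ v + v ⬝ᵥ (Y * S⁻¹ * Y) *ᵥ v := by
    conv_lhs => rw [hYeq]
    rw [add_mulVec, dotProduct_add]
  have l1 : ∀ a b : Fin k → ℝ, a ⬝ᵥ (X⁻¹ + Y⁻¹)⁻¹ *ᵥ b = a ⬝ᵥ (X * S⁻¹ * Y) *ᵥ b :=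
    fun a b => by rw [hH']
  have l2 : ∀ a b : Fin k → ℝ, a ⬝ᵥ (X⁻¹ + Y⁻¹)⁻¹ *ᵥ b = a ⬝ᵥ (Y * S⁻¹ * X) *ᵥ b :=
    fun a b => by rw [hH]
  have e4 : (u + v) ⬝ᵥ ((X⁻¹ + Y⁻¹)⁻¹ *ᵥ (u + v))
      = u ⬝ᵥ (X * S⁻¹ * Y) *ᵥ u + u ⬝ᵥ (X * S⁻¹ * Y) *ᵥ v
        + v ⬝ᵥ (Y * S⁻¹ * X) *ᵥ u + v ⬝ᵥ (Y * S⁻¹ * X) *ᵥ v := by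
    rw [mulVec_add, dotProduct_add, add_dotProduct, add_dotProduct, l1 u u, l1 u v, l2 v u,
      l2 v v]
    ring
  have e5 : u ⬝ᵥ (X * S⁻¹ * Y) *ᵥ u = u ⬝ᵥ (Y * S⁻¹ * X) *ᵥ u := by
    rw [← l1 u u, ← l2 u u]
  have key : u ⬝ᵥ X *ᵥ u + v ⬝ᵥ Y *ᵥ v - (u + v) ⬝ᵥ ((X⁻¹ + Y⁻¹)⁻¹ *ᵥ (u + v))
      = (X *ᵥ u - Y *ᵥ v) ⬝ᵥ S⁻¹ *ᵥ (X *ᵥ u - Y *ᵥ v) := by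
    rw [e1, e2, e3, e4, e5]
    ring
  linarith [hw, key]

end Aux

/-- Harmonic mean bound for sums over linear maps. -/
theorem stmt11 (n m : ℕ) (nj : Fin m → ℕ)
    (B : ∀ j : Fin m, Matrix (Fin (nj j)) (Fin n) ℝ)
    (c : Fin m → ℝ) (hc : ∀ j, 0 < c j)
    (G A : ∀ j : Fin m, Matrix (Fin (nj j)) (Fin (nj j)) ℝ)
    (hG : ∀ j, (G j).PosDef) (hA : ∀ j, (A j).PosDef)
    (hMG : (∑ j, c j • ((B j)ᵀ * G j * B j)).PosDef)
    (hMA : (∑ j, c j • ((B j)ᵀ * A j * B j)).PosDef) :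
    (((∑ j, c j • ((B j)ᵀ * G j * B j))⁻¹ + (∑ j, c j • ((B j)ᵀ * A j * B j))⁻¹)⁻¹
      - ∑ j, c j • ((B j)ᵀ * ((G j)⁻¹ + (A j)⁻¹)⁻¹ * B j)).PosSemidef := by
  set Mg := ∑ j, c j • ((B j)ᵀ * G j * B j) with hMg
  set Ma := ∑ j, c j • ((B j)ᵀ * A j * B j) with hMa
  have hH : (Mg⁻¹ + Ma⁻¹).PosDef := hMG.inv.add hMA.inv
  have hHi : (Mg⁻¹ + Ma⁻¹)⁻¹.PosDef := hH.inv
  set H := (Mg⁻¹ + Ma⁻¹)⁻¹ with hHdef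
  have hHsym : Hᵀ = H := by simpa using hHi.1.eq
  have hMgsym : (Mg⁻¹)ᵀ = Mg⁻¹ := by simpa using hMG.inv.1.eq
  have hMasym : (Ma⁻¹)ᵀ = Ma⁻¹ := by simpa using hMA.inv.1.eq
  have hSj : ∀ j, ((G j)⁻¹ + (A j)⁻¹)⁻¹.PosDef := fun j => ((hG j).inv.add (hA j).inv).inv
  have hSum : (∑ j, c j • ((B j)ᵀ * ((G j)⁻¹ + (A j)⁻¹)⁻¹ * B j)).PosSemidef := by
    refine psd_sum _ fun j => psd_smul (hc j).le ?_
    have := (hSj j).posSemidef.conjTranspose_mul_mul_same (B j)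
    simpa using this
  refine posSemidef_iff_dotProduct_mulVec.mpr ⟨?_, ?_⟩
  · exact hHi.1.sub hSum.1
  · intro x
    have hHd : IsUnit (Mg⁻¹ + Ma⁻¹).det := isUnit_iff_ne_zero.2 hH.det_pos.ne'
    have hMgd : IsUnit Mg.det := isUnit_iff_ne_zero.2 hMG.det_pos.ne'
    have hMad : IsUnit Ma.det := isUnit_iff_ne_zero.2 hMA.det_pos.ne'
    set w := H *ᵥ x with hw
    set u := Mg⁻¹ *ᵥ w with hu
    set v := Ma⁻¹ *ᵥ w with hv
    have huv : u + v = x := by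
      rw [hu, hv, ← add_mulVec, hw, mulVec_mulVec, hHdef, Matrix.mul_nonsing_inv _ hHd,
        one_mulVec]
    -- uᵀ Mg u = wᵀ Mg⁻¹ w  and similarly for v
    have e1 : u ⬝ᵥ Mg *ᵥ u = w ⬝ᵥ Mg⁻¹ *ᵥ w := by
      rw [hu, mdot, hMgsym, mulVec_mulVec, Matrix.nonsing_inv_mul _ hMgd, Matrix.one_mul]
    have e2 : v ⬝ᵥ Ma *ᵥ v = w ⬝ᵥ Ma⁻¹ *ᵥ w := by
      rw [hv, mdot, hMasym, mulVec_mulVec, Matrix.nonsing_inv_mul _ hMad, Matrix.one_mul]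
    -- xᵀ H x = wᵀ (Mg⁻¹ + Ma⁻¹) w
    have e3 : x ⬝ᵥ H *ᵥ x = u ⬝ᵥ Mg *ᵥ u + v ⬝ᵥ Ma *ᵥ v := by
      rw [e1, e2, ← dotProduct_add, ← add_mulVec, hw, mdot, hHsym, mulVec_mulVec,
        hHdef, Matrix.nonsing_inv_mul _ hHd, Matrix.one_mul]
    -- main inequality
    have hquad : ∀ j : Fin m,
        (B j *ᵥ x) ⬝ᵥ ((G j)⁻¹ + (A j)⁻¹)⁻¹ *ᵥ (B j *ᵥ x)
          ≤ (B j *ᵥ u) ⬝ᵥ (G j) *ᵥ (B j *ᵥ u) + (B j *ᵥ v) ⬝ᵥ (A j) *ᵥ (B j *ᵥ v) := by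
      intro j
      have := harm_quad (G j) (A j) (hG j) (hA j) (B j *ᵥ u) (B j *ᵥ v)
      rwa [← mulVec_add, huv] at this
    have hsum : x ⬝ᵥ (∑ j, c j • ((B j)ᵀ * ((G j)⁻¹ + (A j)⁻¹)⁻¹ * B j)) *ᵥ x
        ≤ x ⬝ᵥ H *ᵥ x := by
      rw [e3, quadSum, quadSum B c A, quadSum B c G, ← Finset.sum_add_distrib]
      refine Finset.sum_le_sum fun j _ => ?_
      rw [← mul_add]
      exact mul_le_mul_of_nonneg_left (hquad j) (hc j).le
    have hx : star x = x := by simp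
    rw [hx, sub_mulVec, dotProduct_sub, sub_nonneg]
    exact hsum
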